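/- arXiv:2103.07304 — 3 statements merged into one kernel-verified Lean document; each statement's English description precedes it below -/
import Mathlib

section
/- If α > 0, β > 0, and v : ℝ → ℝ² solves the ODE v' = (α − β|v|²)·v with initial condition v(0) = ν·w where |w| = √(α/β) and 0 < ν < 1, then v(t) → w as t → ∞. -/
open Filter Set Metric Real

lemma lipAux (α β R : ℝ) (hα : 0 ≤ α) (hβ : 0 ≤ β) (hR : 0 ≤ R) :
    LipschitzOnWith (α + 3 * β * R ^ 2).toNNReal
      (fun x : EuclideanSpace ℝ (Fin 2) => (α - β * ‖x‖ ^ 2) • x)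
      (Metric.closedBall 0 R) := by
  rw [lipschitzOnWith_iff_dist_le_mul]
  intro x hx y hy
  rw [mem_closedBall_zero_iff] at hx hy
  rw [dist_eq_norm, dist_eq_norm]
  rw [Real.coe_toNNReal _ (by positivity)]
  have hid : (α - β * ‖x‖ ^ 2) • x - (α - β * ‖y‖ ^ 2) • y
      = (α - β * ‖x‖ ^ 2) • (x - y) + (β * (‖y‖ ^ 2 - ‖x‖ ^ 2)) • y := by
    module
  rw [hid]
  have h1 : ‖(α - β * ‖x‖ ^ 2) • (x - y) + (β * (‖y‖ ^ 2 - ‖x‖ ^ 2)) • y‖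
      ≤ |α - β * ‖x‖ ^ 2| * ‖x - y‖ + β * |‖y‖ ^ 2 - ‖x‖ ^ 2| * ‖y‖ := by
    refine le_trans (norm_add_le _ _) ?_
    rw [norm_smul, norm_smul, Real.norm_eq_abs, Real.norm_eq_abs, abs_mul,
      abs_of_nonneg hβ]
  refine le_trans h1 ?_
  have hx2 : ‖x‖ ^ 2 ≤ R ^ 2 := by nlinarith [norm_nonneg x]
  have hy2 : ‖y‖ ^ 2 ≤ R ^ 2 := by nlinarith [norm_nonneg y]
  have h2 : |α - β * ‖x‖ ^ 2| ≤ α + β * R ^ 2 := by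
    rw [abs_le]
    constructor
    · nlinarith [norm_nonneg x, mul_le_mul_of_nonneg_left hx2 hβ]
    · nlinarith [norm_nonneg x, mul_nonneg hβ (sq_nonneg ‖x‖)]
  have h3 : |‖y‖ ^ 2 - ‖x‖ ^ 2| ≤ (‖x‖ + ‖y‖) * ‖x - y‖ := by
    have h4 : |‖y‖ - ‖x‖| ≤ ‖x - y‖ := by
      rw [← norm_neg (x - y), neg_sub]
      exact abs_norm_sub_norm_le y x
    rw [abs_le] at h4 ⊢
    constructor <;> nlinarith [norm_nonneg x, norm_nonneg y, norm_nonneg (x - y)]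
  have e1 : |α - β * ‖x‖ ^ 2| * ‖x - y‖ ≤ (α + β * R ^ 2) * ‖x - y‖ :=
    mul_le_mul_of_nonneg_right h2 (norm_nonneg _)
  have e2 : |‖y‖ ^ 2 - ‖x‖ ^ 2| * ‖y‖ ≤ ((‖x‖ + ‖y‖) * ‖x - y‖) * R :=
    mul_le_mul h3 hy (norm_nonneg y) (by positivity)
  have e3 : 0 ≤ β * R * ‖x - y‖ * (2 * R - ‖x‖ - ‖y‖) := by
    have : ‖x‖ + ‖y‖ ≤ 2 * R := by linarith
    have h0 : 0 ≤ β * R * ‖x - y‖ := by positivity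
    nlinarith
  nlinarith [mul_le_mul_of_nonneg_left e2 hβ]

theorem stmt1 (α β ν : ℝ) (hα : 0 < α) (hβ : 0 < β) (hν : 0 < ν) (hν1 : ν < 1)
    (v : ℝ → EuclideanSpace ℝ (Fin 2)) (w : EuclideanSpace ℝ (Fin 2))
    (hw : ‖w‖ = Real.sqrt (α / β))
    (hode : ∀ t, HasDerivAt v ((α - β * ‖v t‖ ^ 2) • v t) t)
    (h0 : v 0 = ν • w) :
    Filter.Tendsto v Filter.atTop (nhds w) := by
  set Kc : ℝ := (1 - ν ^ 2) / ν ^ 2 with hKc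
  have hKpos : 0 < Kc := div_pos (by nlinarith) (by positivity)
  set φ : ℝ → ℝ := fun t => 1 + Kc * Real.exp (-(2 * α) * t) with hφdef
  have hφpos : ∀ t, 0 < φ t := fun t => by
    have := Real.exp_pos (-(2 * α) * t); simp only [hφdef]; nlinarith
  have hφ1 : ∀ t, 1 ≤ φ t := fun t => by
    have := Real.exp_pos (-(2 * α) * t); simp only [hφdef]; nlinarith
  have hspos : ∀ t, 0 < Real.sqrt (φ t) := fun t => Real.sqrt_pos.mpr (hφpos t)
  have hsq : ∀ t, Real.sqrt (φ t) ^ 2 = φ t := fun t => Real.sq_sqrt (hφpos t).le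
  have hs1 : ∀ t, 1 ≤ Real.sqrt (φ t) := fun t => by
    rw [show (1 : ℝ) = Real.sqrt 1 by simp]
    exact Real.sqrt_le_sqrt (hφ1 t)
  set g : ℝ → ℝ := fun t => (Real.sqrt (φ t))⁻¹ with hgdef
  have hgpos : ∀ t, 0 < g t := fun t => inv_pos.mpr (hspos t)
  have hgle1 : ∀ t, g t ≤ 1 := fun t => inv_le_one_of_one_le₀ (hs1 t)
  set V : ℝ → EuclideanSpace ℝ (Fin 2) := fun t => g t • w with hVdef
  have hw2 : ‖w‖ ^ 2 = α / β := by rw [hw, Real.sq_sqrt (by positivity)]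
  -- derivative of φ
  have hφ' : ∀ t, HasDerivAt φ (Kc * (Real.exp (-(2 * α) * t) * -(2 * α))) t := by
    intro t
    have h1 : HasDerivAt (fun t : ℝ => -(2 * α) * t) (-(2 * α)) t := by
      simpa using (hasDerivAt_id t).const_mul (-(2 * α))
    exact ((h1.exp).const_mul Kc).const_add 1
  -- derivative of g
  have hg' : ∀ t, HasDerivAt g
      (-((Kc * (Real.exp (-(2 * α) * t) * -(2 * α))) / (2 * Real.sqrt (φ t)))
        / Real.sqrt (φ t) ^ 2) t := by
    intro t
    exact ((hφ' t).sqrt (hφpos t).ne').inv (hspos t).ne'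
  -- V solves the ODE
  have hVnorm : ∀ t, ‖V t‖ ^ 2 = g t ^ 2 * (α / β) := fun t => by
    rw [hVdef]
    simp only [norm_smul, Real.norm_eq_abs, mul_pow, sq_abs, hw2]
  have hVode : ∀ t, HasDerivAt V ((α - β * ‖V t‖ ^ 2) • V t) t := by
    intro t
    have hd := (hg' t).smul_const w
    have key : (-((Kc * (Real.exp (-(2 * α) * t) * -(2 * α))) / (2 * Real.sqrt (φ t)))
        / Real.sqrt (φ t) ^ 2) • w = (α - β * ‖V t‖ ^ 2) • V t := by
      rw [hVdef]
      rw [smul_smul]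
      congr 1
      rw [hVnorm t]
      have hs := hsq t
      have hsn := (hspos t).ne'
      have hgt : g t = (Real.sqrt (φ t))⁻¹ := rfl
      rw [hgt]
      field_simp
      ring_nf
      rw [hs]
      simp only [hφdef]
      ring_nf
    rw [key] at hd
    exact hd
  -- initial condition
  have hV0 : V 0 = ν • w := by
    rw [hVdef]
    have : φ 0 = ν⁻¹ ^ 2 := by
      simp only [hφdef, mul_zero, neg_zero, zero_mul, Real.exp_zero, mul_one, hKc]
      field_simp
      ring
    simp only [hgdef, this]
    rw [Real.sqrt_sq (by positivity), inv_inv]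
  -- uniqueness: v = V on [0, ∞)
  have huniq : ∀ T, 0 ≤ T → v T = V T := by
    intro T hT
    obtain ⟨M, hM⟩ := (isCompact_Icc : IsCompact (Icc (0:ℝ) T)).exists_bound_of_continuousOn
      (fun t _ => (hode t).continuousAt.continuousWithinAt)
    set R : ℝ := max M ‖w‖ with hR
    have hR0 : 0 ≤ R := le_max_of_le_right (norm_nonneg w)
    have hVmem : ∀ t, V t ∈ Metric.closedBall (0 : EuclideanSpace ℝ (Fin 2)) R := by
      intro t
      rw [mem_closedBall_zero_iff, hVdef]
      rw [norm_smul, Real.norm_eq_abs, abs_of_pos (hgpos t)]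
      calc g t * ‖w‖ ≤ 1 * ‖w‖ := by
            exact mul_le_mul_of_nonneg_right (hgle1 t) (norm_nonneg w)
        _ ≤ R := by rw [one_mul]; exact le_max_right _ _
    have heq := ODE_solution_unique_of_mem_Icc_right
      (v := fun _ (x : EuclideanSpace ℝ (Fin 2)) => (α - β * ‖x‖ ^ 2) • x)
      (s := fun _ => Metric.closedBall (0 : EuclideanSpace ℝ (Fin 2)) R)
      (fun _ _ => lipAux α β R hα.le hβ.le hR0)
      (f := v) (g := V) (a := 0) (b := T)
      (fun t _ => (hode t).continuousAt.continuousWithinAt)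
      (fun t _ => (hode t).hasDerivWithinAt)
      (fun t ht => by
        rw [mem_closedBall_zero_iff]
        exact le_trans (hM t ⟨ht.1, ht.2.le⟩) (le_max_left _ _))
      (fun t _ => (hVode t).continuousAt.continuousWithinAt)
      (fun t _ => (hVode t).hasDerivWithinAt)
      (fun t _ => hVmem t)
      (by rw [h0, hV0])
    exact heq ⟨hT, le_refl T⟩
  -- limit of V
  have hE : Tendsto (fun t : ℝ => Real.exp (-(2 * α) * t)) atTop (nhds 0) := by
    have h1 : Tendsto (fun t : ℝ => (2 * α) * t) atTop atTop :=
      Tendsto.const_mul_atTop (by positivity) tendsto_id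
    have := Real.tendsto_exp_neg_atTop_nhds_zero.comp h1
    refine this.congr fun t => ?_
    simp [Function.comp]
  have hφlim : Tendsto φ atTop (nhds 1) := by
    have : Tendsto φ atTop (nhds (1 + Kc * 0)) :=
      tendsto_const_nhds.add (tendsto_const_nhds.mul hE)
    simpa using this
  have hglim : Tendsto g atTop (nhds 1) := by
    have h1 : Tendsto (fun t => Real.sqrt (φ t)) atTop (nhds 1) := by
      have := (Real.continuous_sqrt.tendsto 1).comp hφlim
      simpa [Function.comp_def] using this
    have := h1.inv₀ (by norm_num)
    simpa using this
  have hVlim : Tendsto V atTop (nhds w) := by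
    have := hglim.smul_const w
    simpa using this
  refine hVlim.congr' ?_
  filter_upwards [eventually_ge_atTop (0:ℝ)] with t ht
  exact (huniq t ht).symm
end

section
/- Consider the matrix A = [[0, √(α/β), 0], [−ω/R − φ'(0)·√(α/β), 0, 2/R], [0, −φ(0), −2α]] with α, β, R > 0, φ(0) > 0, and ω = √(α/β)/R = φ(0)·√(β/α). Its characteristic polynomial is λ³ + a₂λ² + a₁λ + a₀ with a₂ = 2α, a₁ = (ω/R + φ'(0)√(α/β))·√(α/β) + 2φ(0)/R, a₀ = 2α·(ω/R + φ'(0)√(α/β))·√(α/β). If ω/R + √(α/β)·φ'(0) > 0, then all eigenvalues of A have negative real part. -/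
open Polynomial

lemma cubic_root_re_neg (a b c : ℝ) (ha : 0 < a) (hc : 0 < c) (hab : c < a * b)
    (z : ℂ) (hz : z ^ 3 + (a : ℂ) * z ^ 2 + (b : ℂ) * z + (c : ℂ) = 0) : z.re < 0 := by
  have hb : 0 < b := by nlinarith
  obtain ⟨x, y⟩ := z
  simp only [Complex.ext_iff, Complex.add_re, Complex.add_im, Complex.mul_re, Complex.mul_im,
    Complex.ofReal_re, Complex.ofReal_im, Complex.zero_re, Complex.zero_im,
    pow_succ, pow_zero, one_mul, Complex.one_re, Complex.one_im] at hz
  obtain ⟨hre, him⟩ := hz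
  show x < 0
  by_contra hle
  push_neg at hle
  rcases eq_or_ne y 0 with h0 | h0
  · rw [h0] at hre
    nlinarith [hre]
  · have key : 3 * x ^ 2 - y ^ 2 + 2 * a * x + b = 0 := by
      have : y * (3 * x ^ 2 - y ^ 2 + 2 * a * x + b) = 0 := by nlinarith [him]
      rcases mul_eq_zero.mp this with h | h
      · exact absurd h h0
      · exact h
    have hy2 : y ^ 2 = 3 * x ^ 2 + 2 * a * x + b := by linarith
    have hre' : x ^ 3 - 3 * x * y ^ 2 + a * x ^ 2 - a * y ^ 2 + b * x + c = 0 := by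
      nlinarith [hre]
    rw [hy2] at hre'
    nlinarith [hre', mul_nonneg (mul_nonneg hle hle) hle, mul_nonneg ha.le (mul_nonneg hle hle),
      mul_nonneg hb.le hle, mul_nonneg (mul_nonneg ha.le ha.le) hle]

lemma spectrum_root_charpoly (M : Matrix (Fin 3) (Fin 3) ℂ) (z : ℂ) (hz : z ∈ spectrum ℂ M) :
    M.charpoly.eval z = 0 := by
  rw [spectrum.mem_iff] at hz
  have hdet : (algebraMap ℂ (Matrix (Fin 3) (Fin 3) ℂ) z - M).det = M.charpoly.eval z := by
    rw [Matrix.charpoly, ← coe_evalRingHom, RingHom.map_det]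
    congr 1
    ext i j
    by_cases h : i = j <;>
      simp [Matrix.charmatrix_apply, h, Matrix.algebraMap_matrix_apply, Matrix.diagonal]
  have := mt (Matrix.isUnit_iff_isUnit_det _).mpr hz
  rw [isUnit_iff_ne_zero, not_not] at this
  rw [← hdet, this]

theorem stmt14 (α β R ω φ0 φ'0 : ℝ) (hα : 0 < α) (hβ : 0 < β) (hR : 0 < R)
    (hφ0 : 0 < φ0)
    (hω1 : ω = Real.sqrt (α / β) / R) (hω2 : ω = φ0 * Real.sqrt (β / α))
    (A : Matrix (Fin 3) (Fin 3) ℝ)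
    (hA : A = !![0, Real.sqrt (α / β), 0;
                 -(ω / R) - φ'0 * Real.sqrt (α / β), 0, 2 / R;
                 0, -φ0, -2 * α]) :
    A.charpoly = X ^ 3 + C (2 * α) * X ^ 2
        + C ((ω / R + φ'0 * Real.sqrt (α / β)) * Real.sqrt (α / β) + 2 * φ0 / R) * X
        + C (2 * α * ((ω / R + φ'0 * Real.sqrt (α / β)) * Real.sqrt (α / β))) ∧
    (0 < ω / R + Real.sqrt (α / β) * φ'0 →
      ∀ μ : ℂ, μ ∈ spectrum ℂ (A.map (algebraMap ℝ ℂ)) → μ.re < 0) := by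
  have hqpos : 0 < Real.sqrt (α / β) := Real.sqrt_pos.mpr (div_pos hα hβ)
  have hchar : A.charpoly = X ^ 3 + C (2 * α) * X ^ 2
        + C ((ω / R + φ'0 * Real.sqrt (α / β)) * Real.sqrt (α / β) + 2 * φ0 / R) * X
        + C (2 * α * ((ω / R + φ'0 * Real.sqrt (α / β)) * Real.sqrt (α / β))) := by
    rw [hA, Matrix.charpoly, Matrix.det_fin_three]
    simp [Matrix.charmatrix_apply, Matrix.diagonal, div_eq_mul_inv, map_mul]
    ring
  refine ⟨hchar, ?_⟩
  intro hpos μ hμ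
  have hsq : 0 < (ω / R + φ'0 * Real.sqrt (α / β)) * Real.sqrt (α / β) := by
    apply mul_pos _ hqpos
    nlinarith [hpos]
  have heval : μ ^ 3 + ((2 * α : ℝ) : ℂ) * μ ^ 2
      + (((ω / R + φ'0 * Real.sqrt (α / β)) * Real.sqrt (α / β) + 2 * φ0 / R : ℝ) : ℂ) * μ
      + ((2 * α * ((ω / R + φ'0 * Real.sqrt (α / β)) * Real.sqrt (α / β)) : ℝ) : ℂ) = 0 := by
    have h0 := spectrum_root_charpoly _ μ hμ
    rw [Matrix.charpoly_map, hchar] at h0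
    simpa [Polynomial.map_add, Polynomial.map_mul, Polynomial.map_pow] using h0
  refine cubic_root_re_neg _ _ _ (by linarith) (mul_pos (by linarith) hsq) ?_ μ heval
  have h2 : 0 < 2 * φ0 / R := by positivity
  nlinarith [mul_pos hα h2]
end

section
/- Let x₁,…,x_N ∈ ℝ² with 0 not on any line through a pair of distinct points x_i, x_j, and let x₁ have maximal norm among the x_i. Let R ≥ |x₁| and set x̃₁ = R·x₁/|x₁|. Then for every τ ∈ [0,1] and every j ≠ 1, the distance |x_j − (x₁ + τ(x̃₁ − x₁))| is nondecreasing in τ; in particular it is at least |x_j − x₁|. -/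
theorem stmt17 (N : ℕ) (x : Fin N → EuclideanSpace ℝ (Fin 2)) (R : ℝ)
    (i₀ : Fin N)
    (hline : ∀ i j, i ≠ j → ∀ c : ℝ, c • x i + (1 - c) • x j ≠ 0)
    (hmax : ∀ i, ‖x i‖ ≤ ‖x i₀‖)
    (hR : ‖x i₀‖ ≤ R)
    (x' : EuclideanSpace ℝ (Fin 2)) (hx' : x' = (R / ‖x i₀‖) • x i₀) :
    ∀ j, j ≠ i₀ →
      MonotoneOn (fun τ : ℝ => ‖x j - (x i₀ + τ • (x' - x i₀))‖) (Set.Icc 0 1) ∧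
      ∀ τ ∈ Set.Icc (0 : ℝ) 1, ‖x j - x i₀‖ ≤ ‖x j - (x i₀ + τ • (x' - x i₀))‖ := by
  intro j hj
  have hne : x i₀ ≠ 0 := by
    intro h
    have := hline i₀ j (Ne.symm hj) 1
    simp [h] at this
  have hpos : (0:ℝ) < ‖x i₀‖ := norm_pos_iff.2 hne
  set α : ℝ := R / ‖x i₀‖ - 1 with hαdef
  have hα : 0 ≤ α := by
    have h1 : 1 ≤ R / ‖x i₀‖ := (one_le_div hpos).2 hR
    rw [hαdef]; linarith
  have hdiff : x' - x i₀ = α • x i₀ := by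
    rw [hx', hαdef, sub_smul, one_smul]
  have hinner : (inner ℝ (x j) (x i₀) : ℝ) ≤ ‖x i₀‖ ^ 2 := by
    calc (inner ℝ (x j) (x i₀) : ℝ) ≤ ‖x j‖ * ‖x i₀‖ := real_inner_le_norm _ _
    _ ≤ ‖x i₀‖ ^ 2 := by nlinarith [hmax j, norm_nonneg (x i₀)]
  have hsq : ∀ s : ℝ, ‖x j - s • x i₀‖ ^ 2
      = ‖x j‖ ^ 2 - 2 * s * (inner ℝ (x j) (x i₀) : ℝ) + s ^ 2 * ‖x i₀‖ ^ 2 := by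
    intro s
    rw [norm_sub_sq_real, real_inner_smul_right, norm_smul, Real.norm_eq_abs,
      mul_pow, sq_abs]
    ring
  have key : ∀ s₁ s₂ : ℝ, 1 ≤ s₁ → s₁ ≤ s₂ →
      ‖x j - s₁ • x i₀‖ ≤ ‖x j - s₂ • x i₀‖ := by
    intro s₁ s₂ h1 h12
    have h2 : ‖x j - s₁ • x i₀‖ ^ 2 ≤ ‖x j - s₂ • x i₀‖ ^ 2 := by
      rw [hsq, hsq]
      nlinarith [mul_nonneg (sub_nonneg.2 h12) (sub_nonneg.2 hinner),
        mul_nonneg (mul_nonneg (sub_nonneg.2 h12) (by linarith : (0:ℝ) ≤ s₁ + s₂ - 2))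
          (sq_nonneg ‖x i₀‖)]
    calc ‖x j - s₁ • x i₀‖ = Real.sqrt (‖x j - s₁ • x i₀‖ ^ 2) :=
          (Real.sqrt_sq (norm_nonneg _)).symm
      _ ≤ Real.sqrt (‖x j - s₂ • x i₀‖ ^ 2) := Real.sqrt_le_sqrt h2
      _ = ‖x j - s₂ • x i₀‖ := Real.sqrt_sq (norm_nonneg _)
  have hform : ∀ τ : ℝ, x i₀ + τ • (x' - x i₀) = (1 + τ * α) • x i₀ := by
    intro τ
    rw [hdiff, smul_smul, add_smul, one_smul]
  constructor
  · intro τ₁ hτ₁ τ₂ hτ₂ h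
    simp only [hform]
    exact key _ _ (by nlinarith [hτ₁.1, mul_nonneg hτ₁.1 hα])
      (by nlinarith [mul_le_mul_of_nonneg_right h hα])
  · intro τ hτ
    have := key 1 (1 + τ * α) le_rfl (by nlinarith [mul_nonneg hτ.1 hα])
    rw [hform]
    simpa using this
end
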